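/- The polar cone of the homogenization cone K = clcone(C × {1}) in X × ℝ equals the disjoint union cone(C° × {−1}) ∪ (C^⊖ × {0}), which equals clcone(C° × {−1}). -/

import Mathlib

open scoped Pointwise RealInnerProductSpace

theorem polar_cone_of_homogenization
    {X : Type*} [NormedAddCommGroup X] [InnerProductSpace ℝ X] [CompleteSpace X]
    (C : Set X) (hcl : IsClosed C) (hconv : Convex ℝ C) (h0 : (0 : X) ∈ C) :
    {u : X × ℝ |
        ∀ k ∈ closure (⋃ ρ ∈ Set.Ioi (0 : ℝ), ρ • (C ×ˢ ({1} : Set ℝ))),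
          ⟪k.1, u.1⟫ + k.2 * u.2 ≤ 0} =
        (⋃ ρ ∈ Set.Ioi (0 : ℝ),
            ρ • ({y : X | ∀ c ∈ C, ⟪c, y⟫ ≤ 1} ×ˢ ({-1} : Set ℝ))) ∪
          ({y : X | ∀ c ∈ C, ⟪c, y⟫ ≤ 0} ×ˢ ({0} : Set ℝ)) ∧
      Disjoint
        (⋃ ρ ∈ Set.Ioi (0 : ℝ),
          ρ • ({y : X | ∀ c ∈ C, ⟪c, y⟫ ≤ 1} ×ˢ ({-1} : Set ℝ)))
        ({y : X | ∀ c ∈ C, ⟪c, y⟫ ≤ 0} ×ˢ ({0} : Set ℝ)) ∧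
      {u : X × ℝ |
          ∀ k ∈ closure (⋃ ρ ∈ Set.Ioi (0 : ℝ), ρ • (C ×ˢ ({1} : Set ℝ))),
            ⟪k.1, u.1⟫ + k.2 * u.2 ≤ 0} =
        closure (⋃ ρ ∈ Set.Ioi (0 : ℝ),
          ρ • ({y : X | ∀ c ∈ C, ⟪c, y⟫ ≤ 1} ×ˢ ({-1} : Set ℝ))) := by
  -- abbreviations
  have hchar : ∀ u : X × ℝ,
      (∀ k ∈ closure (⋃ ρ ∈ Set.Ioi (0 : ℝ), ρ • (C ×ˢ ({1} : Set ℝ))),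
        ⟪k.1, u.1⟫ + k.2 * u.2 ≤ 0) ↔ (∀ c ∈ C, ⟪c, u.1⟫ + u.2 ≤ 0) := by
    intro u
    constructor
    · intro h c hc
      have hk : ((c, (1:ℝ)) : X × ℝ) ∈
          (⋃ ρ ∈ Set.Ioi (0 : ℝ), ρ • (C ×ˢ ({1} : Set ℝ))) := by
        refine Set.mem_biUnion (Set.mem_Ioi.mpr one_pos) ?_
        rw [one_smul]
        exact Set.mk_mem_prod hc rfl
      have := h (c, 1) (subset_closure hk)
      simpa using this
    · intro h k hk
      have hclosed : IsClosed {k : X × ℝ | ⟪k.1, u.1⟫ + k.2 * u.2 ≤ 0} := by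
        apply isClosed_le _ continuous_const
        exact ((continuous_fst.inner continuous_const).add
          (continuous_snd.mul continuous_const))
      have hsub : (⋃ ρ ∈ Set.Ioi (0 : ℝ), ρ • (C ×ˢ ({1} : Set ℝ))) ⊆
          {k : X × ℝ | ⟪k.1, u.1⟫ + k.2 * u.2 ≤ 0} := by
        rintro k hk
        obtain ⟨ρ, hρ, hkρ⟩ := Set.mem_iUnion₂.mp hk
        obtain ⟨⟨c, t⟩, hct, rfl⟩ := hkρ
        obtain ⟨hc, ht⟩ := hct
        simp only [Set.mem_singleton_iff] at ht
        subst ht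
        have hρ0 : (0:ℝ) < ρ := hρ
        have h1 := h c hc
        simp only [Set.mem_setOf_eq, Prod.smul_fst, Prod.smul_snd, smul_eq_mul,
          real_inner_smul_left]
        nlinarith
      exact closure_minimal hsub hclosed hk
  -- the "elementary" description of the polar cone
  have hmain : {u : X × ℝ |
      ∀ k ∈ closure (⋃ ρ ∈ Set.Ioi (0 : ℝ), ρ • (C ×ˢ ({1} : Set ℝ))),
        ⟪k.1, u.1⟫ + k.2 * u.2 ≤ 0} =
      (⋃ ρ ∈ Set.Ioi (0 : ℝ),
          ρ • ({y : X | ∀ c ∈ C, ⟪c, y⟫ ≤ 1} ×ˢ ({-1} : Set ℝ))) ∪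
        ({y : X | ∀ c ∈ C, ⟪c, y⟫ ≤ 0} ×ˢ ({0} : Set ℝ)) := by
    ext u
    rw [Set.mem_setOf_eq, hchar u]
    constructor
    · intro h
      have h2 : u.2 ≤ 0 := by
        have := h 0 h0
        simpa using this
      rcases eq_or_lt_of_le h2 with h20 | h20
      · right
        refine Set.mk_mem_prod ?_ h20
        intro c hc
        have := h c hc
        linarith
      · left
        refine Set.mem_biUnion (Set.mem_Ioi.mpr (neg_pos.mpr h20)) ?_
        have hne : (-u.2) ≠ 0 := ne_of_gt (neg_pos.mpr h20)
        refine ⟨((-u.2)⁻¹ • u.1, -1), ⟨?_, rfl⟩, ?_⟩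
        · intro c hc
          have h1 := h c hc
          rw [real_inner_smul_right]
          rw [inv_mul_le_iff₀ (by linarith : (0:ℝ) < -u.2), mul_one]
          linarith
        · ext
          · simp only [Prod.smul_fst]
            exact smul_inv_smul₀ hne u.1
          · simp
    · rintro (h | h)
      · obtain ⟨ρ, hρ, hmem⟩ := Set.mem_iUnion₂.mp h
        obtain ⟨⟨y, t⟩, ⟨hy, ht⟩, rfl⟩ := hmem
        simp only [Set.mem_singleton_iff] at ht
        subst ht
        intro c hc
        have hρ0 : (0:ℝ) < ρ := hρ
        have h1 := hy c hc
        simp only [Prod.smul_fst, Prod.smul_snd, smul_eq_mul, real_inner_smul_right]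
        nlinarith
      · obtain ⟨h1, h2⟩ := h
        simp only [Set.mem_singleton_iff] at h2
        intro c hc
        have := h1 c hc
        rw [h2]
        linarith
  -- disjointness
  have hdisj : Disjoint
      (⋃ ρ ∈ Set.Ioi (0 : ℝ),
        ρ • ({y : X | ∀ c ∈ C, ⟪c, y⟫ ≤ 1} ×ˢ ({-1} : Set ℝ)))
      ({y : X | ∀ c ∈ C, ⟪c, y⟫ ≤ 0} ×ˢ ({0} : Set ℝ)) := by
    rw [Set.disjoint_left]
    intro u hA hB
    obtain ⟨ρ, hρ, hmem⟩ := Set.mem_iUnion₂.mp hA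
    obtain ⟨⟨y, t⟩, ⟨hy, ht⟩, rfl⟩ := hmem
    simp only [Set.mem_singleton_iff] at ht
    subst ht
    have h2 : ρ • (-1:ℝ) = 0 := hB.2
    have hρ0 : (0:ℝ) < ρ := hρ
    simp only [smul_eq_mul, mul_neg_one, neg_eq_zero] at h2
    exact absurd h2 (ne_of_gt hρ0)
  refine ⟨hmain, hdisj, ?_⟩
  -- closure version
  apply le_antisymm
  · rw [hmain]
    apply Set.union_subset subset_closure
    rintro ⟨y, t⟩ ⟨hy, ht⟩
    simp only [Set.mem_singleton_iff] at ht
    subst ht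
    have htends : Filter.Tendsto (fun n : ℕ => ((y, -(1 / (n+1))) : X × ℝ))
        Filter.atTop (nhds (y, 0)) := by
      refine Filter.Tendsto.prodMk_nhds tendsto_const_nhds ?_
      have := tendsto_one_div_add_atTop_nhds_zero_nat (𝕜 := ℝ)
      simpa using this.neg
    refine mem_closure_of_tendsto htends ?_
    filter_upwards with n
    have hpos : (0:ℝ) < 1 / (n+1) := by positivity
    refine Set.mem_biUnion (Set.mem_Ioi.mpr hpos) ?_
    refine ⟨(((1:ℝ) / (n+1))⁻¹ • y, -1), ⟨?_, rfl⟩, ?_⟩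
    · intro c hc
      rw [real_inner_smul_right]
      have := hy c hc
      have h1 : (0:ℝ) ≤ ((1:ℝ) / (n+1))⁻¹ := by positivity
      nlinarith
    · ext
      · simp only [Prod.smul_fst]
        exact smul_inv_smul₀ (ne_of_gt hpos) y
      · simp
  · have hclosed : IsClosed {u : X × ℝ |
        ∀ k ∈ closure (⋃ ρ ∈ Set.Ioi (0 : ℝ), ρ • (C ×ˢ ({1} : Set ℝ))),
          ⟪k.1, u.1⟫ + k.2 * u.2 ≤ 0} := by
      have : {u : X × ℝ |
          ∀ k ∈ closure (⋃ ρ ∈ Set.Ioi (0 : ℝ), ρ • (C ×ˢ ({1} : Set ℝ))),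
            ⟪k.1, u.1⟫ + k.2 * u.2 ≤ 0} =
          ⋂ k ∈ closure (⋃ ρ ∈ Set.Ioi (0 : ℝ), ρ • (C ×ˢ ({1} : Set ℝ))),
            {u : X × ℝ | ⟪k.1, u.1⟫ + k.2 * u.2 ≤ 0} := by
        ext u; simp [Set.mem_iInter₂]
      rw [this]
      refine isClosed_biInter fun k _ => ?_
      apply isClosed_le _ continuous_const
      exact ((continuous_const.inner continuous_fst).add
        (continuous_const.mul continuous_snd))
    refine closure_minimal ?_ hclosed
    rw [hmain]
    exact Set.subset_union_left
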